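/- arXiv:2404.02264 — 2 statements merged into one kernel-verified Lean document; each statement's English description precedes it below -/
import Mathlib

section
/- Suppose v ∈ ℝⁿ∖{0} and f_v ∈ ℳ satisfy: (a) in_v(f_v) ∈ (𝔸⁺)^K, and (b) setting I'_ξ := M_v(I_ξ, f_v) and J'_ξ := O_v ∪ J_ξ, one has (O_w ∪ J'_ξ) ∩ M_w(I'_ξ, in_v(f_v)) ≠ ∅ for every w ∈ ℝⁿ∖{0} and every ξ ∈ Ξ. Then there exists an open subset U of ℝⁿ containing v such that for every v' ∈ U with v' ≠ 0 and every ξ ∈ Ξ: (i) in_{v'}(f_v) ∈ (𝔸⁺)^K, and (ii) (O_{v'} ∪ J_ξ) ∩ M_{v'}(I_ξ, f_v) ≠ ∅. -/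
noncomputable section

/-- The ring `𝔸` of real Laurent polynomials in `n` variables: the monoid algebra of
`(ℤⁿ, +)` over `ℝ`. -/
abbrev LaurentA (n : ℕ) := AddMonoidAlgebra ℝ (Fin n → ℤ)

namespace LaurentA

variable {n K : ℕ}

/-- Dot product `v · a` of a real vector with an integer exponent vector. -/
def dotIZ (v : Fin n → ℝ) (a : Fin n → ℤ) : ℝ := ∑ k, v k * (a k : ℝ)

/-- The weighted degree `deg_v f` (with `deg_v 0 = ⊥ = −∞`). -/
def degv (v : Fin n → ℝ) (f : LaurentA n) : WithBot ℝ :=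
  f.coeff.support.sup fun a => ((dotIZ v a : ℝ) : WithBot ℝ)

open scoped Classical in
/-- The initial polynomial `in_v f`: the sum of the monomials of `f` whose weighted
degree at direction `v` is maximal (`in_v 0 = 0`). -/
def initv (v : Fin n → ℝ) (f : LaurentA n) : LaurentA n :=
  AddMonoidAlgebra.ofCoeff (Finsupp.filter (fun a => ((dotIZ v a : ℝ) : WithBot ℝ) = degv v f) f.coeff)

/-- `𝔸⁺`: nonzero Laurent polynomials all of whose coefficients are nonnegative. -/
def Apos (n : ℕ) : Set (LaurentA n) := {f | f ≠ 0 ∧ ∀ a, 0 ≤ f.coeff a}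

/-- `M_v(I, f)`: the set of indices `i ∈ I` for which `deg_v (f i)` is maximal among `I`. -/
def Mv (v : Fin n → ℝ) (I : Set (Fin K)) (f : Fin K → LaurentA n) : Set (Fin K) :=
  {i | i ∈ I ∧ ∀ i' ∈ I, degv v (f i') ≤ degv v (f i)}

/-- `O_v`: the indices `i` with `v · ãᵢ ≠ 0`. -/
def Ov (atil : Fin K → Fin n → ℤ) (v : Fin n → ℝ) : Set (Fin K) :=
  {i | dotIZ v (atil i) ≠ 0}

/-- Evaluation `f(r)` of a Laurent polynomial at a point `r` with positive coordinates. -/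
def evalAt (r : Fin n → ℝ) (f : LaurentA n) : ℝ :=
  ∑ a ∈ f.coeff.support, f.coeff a * ∏ k, r k ^ (a k)

end LaurentA

namespace LaurentA

variable {n : ℕ}

lemma dot_continuous (a : Fin n → ℤ) : Continuous fun v : Fin n → ℝ => dotIZ v a := by
  unfold dotIZ
  exact continuous_finset_sum _ fun k _ => (continuous_apply k).mul continuous_const

lemma dot_add (v w : Fin n → ℝ) (a : Fin n → ℤ) :
    dotIZ (v + w) a = dotIZ v a + dotIZ w a := by
  unfold dotIZ
  rw [← Finset.sum_add_distrib]
  exact Finset.sum_congr rfl fun k _ => by simp [add_mul]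

lemma le_degv {v : Fin n → ℝ} {f : LaurentA n} {a} (ha : a ∈ f.coeff.support) :
    ((dotIZ v a : ℝ) : WithBot ℝ) ≤ degv v f := by
  exact Finset.le_sup (f := fun a => ((dotIZ v a : ℝ) : WithBot ℝ)) ha

lemma exists_degv {v : Fin n → ℝ} {f : LaurentA n} (hf : f ≠ 0) :
    ∃ a, a ∈ f.coeff.support ∧ degv v f = ((dotIZ v a : ℝ) : WithBot ℝ) :=
  Finset.exists_mem_eq_sup _ (Finsupp.support_nonempty_iff.mpr fun h => hf (AddMonoidAlgebra.coeff_eq_zero.mp h)) _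

lemma mem_initv_support {v : Fin n → ℝ} {f : LaurentA n} {a} :
    a ∈ (initv v f).coeff.support ↔ a ∈ f.coeff.support ∧ ((dotIZ v a : ℝ) : WithBot ℝ) = degv v f := by
  classical
  rw [initv, AddMonoidAlgebra.coeff_ofCoeff, Finsupp.support_filter, Finset.mem_filter]

lemma initv_apply (v : Fin n → ℝ) (f : LaurentA n) (a) :
    (initv v f).coeff a = if ((dotIZ v a : ℝ) : WithBot ℝ) = degv v f then f.coeff a else 0 := by
  classical
  rw [initv, AddMonoidAlgebra.coeff_ofCoeff, Finsupp.filter_apply]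

lemma initv_ne_zero {v : Fin n → ℝ} {f : LaurentA n} (hf : f ≠ 0) : initv v f ≠ 0 := by
  obtain ⟨a, haS, hd⟩ := exists_degv (v := v) hf
  intro h0
  have h : a ∈ (initv v f).coeff.support := mem_initv_support.mpr ⟨haS, hd.symm⟩
  rw [h0] at h
  simp at h

lemma ne_zero_of_initv {v : Fin n → ℝ} {f : LaurentA n} (hf : initv v f ≠ 0) : f ≠ 0 := by
  intro h
  apply hf
  subst h
  classical
  ext a
  rw [initv_apply]
  simp

lemma isOpen_imp {α : Type*} [TopologicalSpace α] (P : Prop) {Q : Set α} (h : IsOpen Q) :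
    IsOpen {x | P → x ∈ Q} := by
  by_cases hP : P
  · convert h using 1
    ext x; simp [hP]
  · convert isOpen_univ using 1
    ext x; simp [hP]

end LaurentA

open LaurentA in
/-- If `v ≠ 0` and `f_v ∈ ℳ` satisfy the two conditions of (LocInf),
then there is an open neighbourhood `U` of `v` such that for every nonzero `v' ∈ U` and
every `ξ ∈ Ξ`: `in_{v'}(f_v) ∈ (𝔸⁺)^K` and `(O_{v'} ∪ J_ξ) ∩ M_{v'}(I_ξ, f_v) ≠ ∅`. -/
theorem locinf_open_neighbourhood
    {n K : ℕ} (hn : 1 ≤ n) (hK : 1 ≤ K)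
    (atil : Fin K → Fin n → ℤ)
    {Ξ : Type*} [Finite Ξ] (I J : Ξ → Set (Fin K))
    (M : Submodule (LaurentA n) (Fin K → LaurentA n))
    (v : Fin n → ℝ) (hv : v ≠ 0)
    (fv : Fin K → LaurentA n) (hfvM : fv ∈ M)
    (ha : ∀ i, initv v (fv i) ∈ Apos n)
    (hb : ∀ w : Fin n → ℝ, w ≠ 0 → ∀ ξ : Ξ,
      ((Ov atil w ∪ (Ov atil v ∪ J ξ)) ∩
        Mv w (Mv v (I ξ) fv) (fun i => initv v (fv i))).Nonempty) :
    ∃ U : Set (Fin n → ℝ), IsOpen U ∧ v ∈ U ∧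
      ∀ v' ∈ U, v' ≠ 0 → ∀ ξ : Ξ,
        (∀ i, initv v' (fv i) ∈ Apos n) ∧
        ((Ov atil v' ∪ J ξ) ∩ Mv v' (I ξ) fv).Nonempty := by
  classical
  have hfne : ∀ i, fv i ≠ 0 := fun i => ne_zero_of_initv (ha i).1
  set U1 : Set (Fin n → ℝ) :=
    ⋂ i : Fin K, ⋂ a ∈ (fv i).coeff.support, ⋂ b ∈ (fv i).coeff.support,
      {v' | dotIZ v a < dotIZ v b → v' ∈ {v'' | dotIZ v'' a < dotIZ v'' b}} with hU1def
  set U2 : Set (Fin n → ℝ) :=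
    ⋂ i : Fin K, ⋂ j : Fin K, ⋂ a ∈ (fv i).coeff.support,
      {v' | degv v (fv i) < degv v (fv j) →
        v' ∈ {v'' | ∃ b ∈ (fv j).coeff.support, dotIZ v'' a < dotIZ v'' b}} with hU2def
  set U3 : Set (Fin n → ℝ) :=
    ⋂ i : Fin K, {v' | dotIZ v (atil i) ≠ 0 → v' ∈ {v'' | dotIZ v'' (atil i) ≠ 0}} with hU3def
  refine ⟨U1 ∩ (U2 ∩ U3), ?_, ?_, ?_⟩
  · -- openness
    refine IsOpen.inter ?_ (IsOpen.inter ?_ ?_)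
    · exact isOpen_iInter_of_finite fun i => isOpen_biInter_finset fun a _ =>
        isOpen_biInter_finset fun b _ =>
          isOpen_imp _ (isOpen_lt (dot_continuous a) (dot_continuous b))
    · refine isOpen_iInter_of_finite fun i => isOpen_iInter_of_finite fun j =>
        isOpen_biInter_finset fun a _ => isOpen_imp _ ?_
      have : {v'' : Fin n → ℝ | ∃ b ∈ (fv j).coeff.support, dotIZ v'' a < dotIZ v'' b}
          = ⋃ b ∈ (fv j).coeff.support, {v'' | dotIZ v'' a < dotIZ v'' b} := by
        ext x; simp
      rw [this]
      exact isOpen_biUnion fun b _ => isOpen_lt (dot_continuous a) (dot_continuous b)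
    · refine isOpen_iInter_of_finite fun i => isOpen_imp _ ?_
      exact (isClosed_eq (dot_continuous (atil i)) continuous_const).isOpen_compl
  · -- v ∈ U
    refine ⟨?_, ?_, ?_⟩
    · simp only [hU1def, Set.mem_iInter, Set.mem_setOf_eq]
      exact fun i a _ b _ h => h
    · simp only [hU2def, Set.mem_iInter, Set.mem_setOf_eq]
      intro i j a haS hlt
      have hjne : fv j ≠ 0 := by
        intro h0
        rw [h0] at hlt
        simp only [degv, AddMonoidAlgebra.coeff_zero, Finsupp.support_zero, Finset.sup_empty] at hlt
        exact not_lt_bot hlt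
      obtain ⟨b, hbS, hdb⟩ := exists_degv (v := v) hjne
      refine ⟨b, hbS, ?_⟩
      have : ((dotIZ v a : ℝ) : WithBot ℝ) < ((dotIZ v b : ℝ) : WithBot ℝ) :=
        lt_of_le_of_lt (le_degv haS) (hlt.trans_le hdb.le)
      exact_mod_cast this
    · simp only [hU3def, Set.mem_iInter, Set.mem_setOf_eq]
      exact fun i h => h
  · -- main property
    intro v' hv'U hv'ne ξ
    obtain ⟨hU1, hU2, hU3⟩ := hv'U
    simp only [hU1def, Set.mem_iInter, Set.mem_setOf_eq] at hU1
    simp only [hU2def, Set.mem_iInter, Set.mem_setOf_eq] at hU2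
    simp only [hU3def, Set.mem_iInter, Set.mem_setOf_eq] at hU3
    -- any v'-argmax point of fv i is also a v-argmax point
    have key : ∀ i, ∀ a ∈ (fv i).coeff.support,
        ((dotIZ v' a : ℝ) : WithBot ℝ) = degv v' (fv i) →
        ((dotIZ v a : ℝ) : WithBot ℝ) = degv v (fv i) := by
      intro i a haS hda
      by_contra hne
      have hlt : ((dotIZ v a : ℝ) : WithBot ℝ) < degv v (fv i) :=
        lt_of_le_of_ne (le_degv haS) hne
      obtain ⟨b, hbS, hdb⟩ := exists_degv (v := v) (hfne i)
      have hab : dotIZ v a < dotIZ v b := by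
        have := hlt.trans_le hdb.le
        exact_mod_cast this
      have h1 := hU1 i a haS b hbS hab
      have h2 : ((dotIZ v' b : ℝ) : WithBot ℝ) ≤ ((dotIZ v' a : ℝ) : WithBot ℝ) :=
        (le_degv hbS).trans hda.symm.le
      have h2' : dotIZ v' b ≤ dotIZ v' a := by exact_mod_cast h2
      exact absurd h1 (not_lt.mpr h2')
    constructor
    · -- (i) initv v' (fv i) ∈ Apos n
      intro i
      refine ⟨initv_ne_zero (hfne i), ?_⟩
      intro a
      rw [initv_apply]
      split_ifs with h
      · by_cases haS : a ∈ (fv i).coeff.support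
        · have hva := key i a haS h
          have hpos := (ha i).2 a
          rw [initv_apply, if_pos hva] at hpos
          exact hpos
        · rw [Finsupp.notMem_support_iff.mp haS]
      · exact le_refl 0
    · -- (ii)
      by_cases hvv : v' = v
      · subst hvv
        obtain ⟨i, hiO, hiM⟩ := hb v' hv'ne ξ
        refine ⟨i, ?_, hiM.1⟩
        rcases hiO with h | h | h
        · exact Or.inl h
        · exact Or.inl h
        · exact Or.inr h
      · set w : Fin n → ℝ := v' - v with hwdef
        have hwne : w ≠ 0 := sub_ne_zero.mpr hvv
        have hv'vw : ∀ a, dotIZ v' a = dotIZ v a + dotIZ w a := by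
          intro a
          have hvw : v + w = v' := by rw [hwdef]; abel
          rw [← hvw, dot_add]
        obtain ⟨i, hiO, hiM⟩ := hb w hwne ξ
        obtain ⟨hiI', hiMax⟩ := hiM
        refine ⟨i, ?_, ?_⟩
        · -- O part
          rcases hiO with hOw | hOv | hJ
          · by_cases hOv : dotIZ v (atil i) = 0
            · left
              show dotIZ v' (atil i) ≠ 0
              rw [hv'vw, hOv, zero_add]
              exact hOw
            · exact Or.inl (hU3 i hOv)
          · exact Or.inl (hU3 i hOv)
          · exact Or.inr hJ
        · -- M part: i ∈ Mv v' (I ξ) fv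
          refine ⟨hiI'.1, fun i' hi' => ?_⟩
          by_cases hI' : i' ∈ Mv v (I ξ) fv
          · -- equal v-degrees
            have hdeq : degv v (fv i') = degv v (fv i) :=
              le_antisymm (hiI'.2 i' hi') (hI'.2 i hiI'.1)
            obtain ⟨a, haS, hda⟩ := exists_degv (v := v') (hfne i')
            have hva : ((dotIZ v a : ℝ) : WithBot ℝ) = degv v (fv i') := key i' a haS hda.symm
            have haI : a ∈ (initv v (fv i')).coeff.support := mem_initv_support.mpr ⟨haS, hva⟩
            have h1' : ((dotIZ w a : ℝ) : WithBot ℝ) ≤ degv w (initv v (fv i')) := le_degv haI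
            have h2' := hiMax i' hI'
            obtain ⟨c, hcI, hdc⟩ := exists_degv (v := w) (initv_ne_zero (hfne i))
            have hwac : dotIZ w a ≤ dotIZ w c := by
              have := h1'.trans (h2'.trans hdc.le)
              exact_mod_cast this
            obtain ⟨hcS, hvc⟩ := mem_initv_support.mp hcI
            have hvac : dotIZ v a = dotIZ v c := by
              have : ((dotIZ v a : ℝ) : WithBot ℝ) = ((dotIZ v c : ℝ) : WithBot ℝ) := by
                rw [hva, hdeq, ← hvc]
              exact_mod_cast this
            have hv'ac : dotIZ v' a ≤ dotIZ v' c := by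
              rw [hv'vw a, hv'vw c]
              linarith
            calc degv v' (fv i') = ((dotIZ v' a : ℝ) : WithBot ℝ) := hda
              _ ≤ ((dotIZ v' c : ℝ) : WithBot ℝ) := by exact_mod_cast hv'ac
              _ ≤ degv v' (fv i) := le_degv hcS
          · -- strictly smaller v-degree
            have hlt : degv v (fv i') < degv v (fv i) := by
              have hnot : ¬ ∀ j ∈ I ξ, degv v (fv j) ≤ degv v (fv i') := fun h => hI' ⟨hi', h⟩
              push_neg at hnot
              obtain ⟨j, hjI, hj⟩ := hnot
              exact lt_of_lt_of_le hj (hiI'.2 j hjI)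
            obtain ⟨a, haS, hda⟩ := exists_degv (v := v') (hfne i')
            obtain ⟨b, hbS, hab⟩ := hU2 i' i a haS hlt
            calc degv v' (fv i') = ((dotIZ v' a : ℝ) : WithBot ℝ) := hda
              _ ≤ ((dotIZ v' b : ℝ) : WithBot ℝ) := by exact_mod_cast hab.le
              _ ≤ degv v' (fv i) := le_degv hbS
end
end

section
/- Let G be a group and A an automaton over G with transition type ι. Then the identity element of G belongs to ev(A) if and only if there exists a subset ι' ⊆ ι such that the set ev(A|ι') of evaluations of accepting runs of A that use only transitions from ι' is nonempty and closed under taking inverses in G (i.e., ev(A|ι') is a group). -/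
/-- An automaton over a group `G`: finitely many states `Q` with a distinguished state
`q₁` (both initial and accepting), finitely many transitions `ι` with source, target and
evaluation maps. -/
structure GAutomaton (G Q ι : Type*) where
  q1 : Q
  src : ι → Q
  tgt : ι → Q
  ev : ι → G

namespace GAutomaton

variable {G Q ι : Type*}

/-- An accepting run: a nonempty composable sequence of transitions starting and
ending at `q₁`. -/
def IsAccepting (A : GAutomaton G Q ι) (w : List ι) : Prop :=
  w ≠ [] ∧ w.Chain' (fun x y => A.tgt x = A.src y) ∧
    (∀ x ∈ w.head?, A.src x = A.q1) ∧ (∀ x ∈ w.getLast?, A.tgt x = A.q1)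

/-- `ev(A)`: the set of evaluations of accepting runs. -/
def evSet [Monoid G] (A : GAutomaton G Q ι) : Set G :=
  {g | ∃ w : List ι, A.IsAccepting w ∧ (w.map A.ev).prod = g}

/-- `ev(A|ι')`: the set of evaluations of accepting runs using only transitions in `ι'`. -/
def evSetRestrict [Monoid G] (A : GAutomaton G Q ι) (ι' : Set ι) : Set G :=
  {g | ∃ w : List ι, A.IsAccepting w ∧ (∀ ℓ ∈ w, ℓ ∈ ι') ∧ (w.map A.ev).prod = g}

/-- Auxiliary: a (possibly empty) composable run from state `p` to state `q`. -/
def Good (A : GAutomaton G Q ι) (p q : Q) (w : List ι) : Prop :=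
  w.Chain' (fun x y => A.tgt x = A.src y) ∧
  (∀ x ∈ w.head?, A.src x = p) ∧ (∀ x ∈ w.getLast?, A.tgt x = q) ∧ (w = [] → p = q)

lemma Good.append {A : GAutomaton G Q ι} {p q r : Q} {w₁ w₂ : List ι}
    (h₁ : A.Good p q w₁) (h₂ : A.Good q r w₂) : A.Good p r (w₁ ++ w₂) := by
  obtain ⟨c₁, h₁h, h₁l, h₁e⟩ := h₁
  obtain ⟨c₂, h₂h, h₂l, h₂e⟩ := h₂
  rcases eq_or_ne w₁ [] with rfl | hw₁
  · obtain rfl := h₁e rfl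
    simpa using ⟨c₂, h₂h, h₂l, h₂e⟩
  rcases eq_or_ne w₂ [] with rfl | hw₂
  · obtain rfl := h₂e rfl
    simpa using ⟨c₁, h₁h, h₁l, h₁e⟩
  refine ⟨?_, ?_, ?_, ?_⟩
  · rw [List.Chain', List.isChain_append]
    exact ⟨c₁, c₂, fun x hx y hy => (h₁l x hx).trans (h₂h y hy).symm⟩
  · intro x hx
    rw [List.head?_append] at hx
    obtain ⟨a, w₁', rfl⟩ := List.exists_cons_of_ne_nil hw₁
    exact h₁h x (by simpa using hx)
  · intro x hx
    rw [List.getLast?_append] at hx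
    obtain ⟨a, w₂', rfl⟩ := List.exists_cons_of_ne_nil hw₂
    refine h₂l x ?_
    rcases hx' : (a :: w₂').getLast? with _ | y
    · simp at hx'
    · rw [hx'] at hx; simpa using hx
  · intro h
    simp [hw₁] at h

lemma isAccepting_iff {A : GAutomaton G Q ι} {w : List ι} :
    A.IsAccepting w ↔ w ≠ [] ∧ A.Good A.q1 A.q1 w :=
  ⟨fun ⟨h1, h2, h3, h4⟩ => ⟨h1, h2, h3, h4, fun _ => rfl⟩,
   fun ⟨h1, h2, h3, h4, _⟩ => ⟨h1, h2, h3, h4⟩⟩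

variable [Group G]

/-- From an accepting run of evaluation 1, for each transition `ℓ` of it we get a run
from `tgt ℓ` to `src ℓ`, inside the run, of evaluation `(ev ℓ)⁻¹`. -/
lemma single_inv {A : GAutomaton G Q ι} {w : List ι} (hw : A.IsAccepting w)
    (hw1 : (w.map A.ev).prod = 1) {ℓ : ι} (hℓ : ℓ ∈ w) :
    ∃ v, A.Good (A.tgt ℓ) (A.src ℓ) v ∧ (∀ x ∈ v, x ∈ w) ∧
      (v.map A.ev).prod = (A.ev ℓ)⁻¹ := by
  obtain ⟨a, b, rfl⟩ := List.append_of_mem hℓ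
  obtain ⟨hne, hch, hhd, hlast⟩ := hw
  rw [List.Chain', List.isChain_append, List.isChain_cons] at hch
  obtain ⟨ca, ⟨hb_hd, cb⟩, hab⟩ := hch
  have gooda : A.Good A.q1 (A.src ℓ) a := by
    refine ⟨ca, ?_, fun x hx => hab x hx ℓ rfl, ?_⟩
    · intro x hx
      refine hhd x ?_
      obtain ⟨y, a', rfl⟩ := List.exists_cons_of_ne_nil (by rintro rfl; simp at hx : a ≠ [])
      simpa using hx
    · rintro rfl
      exact (hhd ℓ (by simp)).symm
  have goodb : A.Good (A.tgt ℓ) A.q1 b := by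
    refine ⟨cb, fun x hx => (hb_hd x hx).symm, ?_, ?_⟩
    · intro x hx
      refine hlast x ?_
      rw [List.getLast?_append]
      obtain ⟨y, b', rfl⟩ := List.exists_cons_of_ne_nil (by rintro rfl; simp at hx : b ≠ [])
      rcases hx' : (y :: b').getLast? with _ | z
      · simp at hx'
      · rw [hx'] at hx
        simp_all
    · rintro rfl
      exact hlast ℓ (by simp)
  refine ⟨b ++ a, goodb.append gooda, ?_, ?_⟩
  · intro x hx
    rcases List.mem_append.mp hx with h | h
    · exact List.mem_append.mpr (Or.inr (List.mem_cons_of_mem _ h))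
    · exact List.mem_append.mpr (Or.inl h)
  · have h1 : (a.map A.ev).prod * (A.ev ℓ * (b.map A.ev).prod) = 1 := by
      simpa [mul_assoc] using hw1
    have h2 : A.ev ℓ * (b.map A.ev).prod = ((a.map A.ev).prod)⁻¹ :=
      (inv_eq_of_mul_eq_one_right h1).symm
    have h3 : (b.map A.ev).prod = (A.ev ℓ)⁻¹ * ((a.map A.ev).prod)⁻¹ := by
      rw [← h2, inv_mul_cancel_left]
    simp [h3, mul_assoc]

lemma inv_run {A : GAutomaton G Q ι} {w : List ι} (hw : A.IsAccepting w)
    (hw1 : (w.map A.ev).prod = 1) :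
    ∀ (u : List ι) (p q : Q), A.Good p q u → (∀ ℓ ∈ u, ℓ ∈ w) →
    ∃ v, A.Good q p v ∧ (∀ ℓ ∈ v, ℓ ∈ w) ∧ (v.map A.ev).prod = ((u.map A.ev).prod)⁻¹ := by
  intro u
  induction u with
  | nil =>
      intro p q hg _
      obtain rfl := hg.2.2.2 rfl
      exact ⟨[], ⟨List.isChain_nil, by simp, by simp, fun _ => rfl⟩, by simp, by simp⟩
  | cons ℓ u ih =>
      intro p q hg hmem
      obtain ⟨hch, hhd, hlast, -⟩ := hg
      rw [List.Chain', List.isChain_cons] at hch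
      have hsrc : A.src ℓ = p := hhd ℓ rfl
      have hgu : A.Good (A.tgt ℓ) q u := by
        refine ⟨hch.2, fun x hx => (hch.1 x hx).symm, ?_, ?_⟩
        · intro x hx
          refine hlast x ?_
          rcases hx' : u.getLast? with _ | z
          · simp [List.getLast?_eq_none_iff.mp hx'] at hx
          · rw [hx'] at hx
            obtain rfl : z = x := by simpa using hx
            rw [List.getLast?_cons, hx']  -- may not exist; fix later
            rfl
        · rintro rfl
          simpa using hlast ℓ (by simp)
      obtain ⟨v, hv, hvmem, hvp⟩ := ih (A.tgt ℓ) q hgu (fun x hx => hmem x (List.mem_cons_of_mem _ hx))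
      obtain ⟨v', hv', hv'mem, hv'p⟩ := single_inv hw hw1 (hmem ℓ List.mem_cons_self)
      refine ⟨v ++ v', ?_, ?_, ?_⟩
      · rw [← hsrc]
        exact hv.append hv'
      · intro x hx
        rcases List.mem_append.mp hx with h | h
        · exact hvmem x h
        · exact hv'mem x h
      · simp [hvp, hv'p, mul_assoc]

end GAutomaton

/-- For an automaton `A` over a group `G`, the identity belongs to
`ev(A)` iff there is a subset `ι'` of the transitions such that `ev(A|ι')` is nonempty
and closed under inverses (i.e. is a group). -/
theorem one_mem_evSet_iff_subautomaton_group
    {G Q ι : Type*} [Group G] [Fintype Q] [Fintype ι]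
    (A : GAutomaton G Q ι) :
    (1 : G) ∈ A.evSet ↔
      ∃ ι' : Set ι, (A.evSetRestrict ι').Nonempty ∧
        ∀ g ∈ A.evSetRestrict ι', g⁻¹ ∈ A.evSetRestrict ι' := by
  constructor
  · rintro ⟨w, hw, hw1⟩
    refine ⟨{ℓ | ℓ ∈ w}, ⟨1, w, hw, fun ℓ hℓ => hℓ, hw1⟩, ?_⟩
    rintro g ⟨u, hu, humem, rfl⟩
    obtain ⟨hune, hugood⟩ := GAutomaton.isAccepting_iff.mp hu
    obtain ⟨v, hv, hvmem, hvp⟩ := GAutomaton.inv_run hw hw1 u A.q1 A.q1 hugood humem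
    have hwgood := (GAutomaton.isAccepting_iff.mp hw).2
    refine ⟨v ++ w, GAutomaton.isAccepting_iff.mpr ⟨by simp [hw.1], hv.append hwgood⟩, ?_, ?_⟩
    · intro x hx
      rcases List.mem_append.mp hx with h | h
      · exact hvmem x h
      · exact h
    · simp [hvp, hw1]
  · rintro ⟨ι', ⟨g, u, hu, humem, hup⟩, hinv⟩
    obtain ⟨u', hu', hu'mem, hu'p⟩ := hinv g ⟨u, hu, humem, hup⟩
    refine ⟨u ++ u', ?_, ?_⟩
    · exact GAutomaton.isAccepting_iff.mpr ⟨by simp [hu.1],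
        ((GAutomaton.isAccepting_iff.mp hu).2).append ((GAutomaton.isAccepting_iff.mp hu').2)⟩
    · simp [hup, hu'p]
end
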